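/- If W₁ and W₂ are two spaces of quasi-exponentials (finite-dimensional spaces with bases of quasi-exponentials) whose monic fundamental difference operators coincide, S_{W₁} = S_{W₂}, then W₁ = W₂. -/

import Mathlib

/-- A quasi-exponential: a function of the form `x ↦ αˣ p(x)` with `α ∈ ℂ*` and `p ∈ ℂ[x]`. -/
def IsQuasiExponential (g : ℂ → ℂ) : Prop :=
  ∃ (α : ℂ) (p : Polynomial ℂ), α ≠ 0 ∧
    ∀ x : ℂ, g x = Complex.exp (x * Complex.log α) * p.eval x

/-- A monic difference operator `S = Tⁿ + ∑ⱼ aⱼ(x) T^(n-j)` of order `n` applied to `g`. -/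
noncomputable def diffOpApply {n : ℕ} (a : Fin n → ℂ → ℂ) (g : ℂ → ℂ) (x : ℂ) : ℂ :=
  g (x + n) + ∑ j : Fin n, a j x * g (x + ((n - (j.val + 1) : ℕ) : ℂ))

section Aux
open Polynomial Complex

noncomputable def Phi (β γ : ℂ) (p : ℂ[X]) : ℂ[X] := β • p.comp (X + C 1) - γ • p

lemma natDegree_XC1 : (X + C (1:ℂ)).natDegree = 1 := natDegree_X_add_C 1

lemma Phi_eval (β γ : ℂ) (p : ℂ[X]) (m : ℕ) :
    β ^ m * (Phi β γ p).eval (m : ℂ) =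
      β ^ (m+1) * p.eval ((m+1 : ℕ) : ℂ) - γ * (β ^ m * p.eval (m : ℂ)) := by
  simp [Phi, eval_comp]
  ring

lemma comp_XC1_lc (p : ℂ[X]) : (p.comp (X + C 1)).leadingCoeff = p.leadingCoeff := by
  rcases eq_or_ne p.natDegree 0 with h0 | h0
  · rw [eq_C_of_natDegree_le_zero (le_of_eq h0)]; simp
  · rw [leadingCoeff_comp (by rw [natDegree_XC1]; exact one_ne_zero)]
    rw [(monic_X_add_C (1:ℂ)).leadingCoeff, one_pow, mul_one]

lemma comp_XC1_natDegree (p : ℂ[X]) : (p.comp (X + C 1)).natDegree = p.natDegree := by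
  rw [natDegree_comp, natDegree_XC1, mul_one]

lemma Phi_eq_zero_imp (β γ : ℂ) (hβγ : β ≠ γ) (p : ℂ[X]) (h : Phi β γ p = 0) : p = 0 := by
  by_contra hp
  have hc : (p.comp (X + C 1)).coeff p.natDegree = p.leadingCoeff := by
    rw [← comp_XC1_lc p, leadingCoeff, comp_XC1_natDegree]
  have e : (Phi β γ p).coeff p.natDegree = β * p.leadingCoeff - γ * p.leadingCoeff := by
    rw [Phi, coeff_sub, coeff_smul, coeff_smul, hc, coeff_natDegree, smul_eq_mul, smul_eq_mul]
  rw [h, coeff_zero] at e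
  have : (β - γ) * p.leadingCoeff = 0 := by linear_combination -e
  rcases mul_eq_zero.mp this with h' | h'
  · exact hβγ (sub_eq_zero.mp h')
  · exact hp (leadingCoeff_eq_zero.mp h')

lemma Phi_kill (α : ℂ) : ∀ d : ℕ, ∀ p : ℂ[X], p.natDegree ≤ d → (Phi α α)^[d+1] p = 0 := by
  intro d
  induction d with
  | zero =>
    intro p hp
    rw [eq_C_of_natDegree_le_zero hp]
    simp [Phi]
  | succ d ih =>
    intro p hp
    rw [Function.iterate_succ_apply]
    apply ih
    rcases eq_or_ne p 0 with rfl | hp0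
    · simp [Phi]
    have : Phi α α p = α • (p.comp (X + C 1) - p) := by rw [Phi, smul_sub]
    rw [this]
    have hcomp0 : p.comp (X + C 1) ≠ 0 := by
      intro hcc
      rcases comp_eq_zero_iff.mp hcc with rfl | ⟨-, hq⟩
      · exact hp0 rfl
      · have := congrArg natDegree hq
        rw [natDegree_XC1, natDegree_C] at this
        exact one_ne_zero this
    rcases eq_or_ne (p.comp (X + C 1) - p) 0 with h0 | h0
    · rw [h0]; simp
    have hdeg : (p.comp (X + C 1) - p).degree < p.degree := by
      have hd : (p.comp (X + C 1)).degree = p.degree := by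
        rw [degree_eq_natDegree hcomp0, degree_eq_natDegree hp0, comp_XC1_natDegree]
      have := degree_sub_lt hd hcomp0 (comp_XC1_lc p)
      rwa [hd] at this
    have := natDegree_lt_natDegree h0 hdeg
    calc (α • (p.comp (X + C 1) - p)).natDegree ≤ (p.comp (X + C 1) - p).natDegree :=
          natDegree_smul_le _ _
      _ ≤ d := by omega

lemma Phi_iter_eq_zero_imp (β γ : ℂ) (hβγ : β ≠ γ) (k : ℕ) (p : ℂ[X])
    (h : (Phi β γ)^[k] p = 0) : p = 0 := by
  induction k generalizing p with
  | zero => simpa using h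
  | succ k ih =>
    rw [Function.iterate_succ_apply] at h
    exact Phi_eq_zero_imp β γ hβγ p (ih _ h)

lemma step_sum (S : Finset ℂ) (P : ℂ → ℂ[X]) (γ : ℂ)
    (h : ∀ m : ℕ, ∑ α ∈ S, α ^ m * (P α).eval (m : ℂ) = 0) :
    ∀ m : ℕ, ∑ α ∈ S, α ^ m * (Phi α γ (P α)).eval (m : ℂ) = 0 := by
  intro m
  have h1 := h (m + 1)
  have h2 := h m
  calc ∑ α ∈ S, α ^ m * (Phi α γ (P α)).eval (m : ℂ)
      = ∑ α ∈ S, (α ^ (m+1) * (P α).eval ((m+1 : ℕ) : ℂ) - γ * (α ^ m * (P α).eval (m : ℂ))) := by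
        exact Finset.sum_congr rfl fun α _ => Phi_eval α γ (P α) m
    _ = (∑ α ∈ S, α ^ (m+1) * (P α).eval ((m+1 : ℕ) : ℂ))
        - γ * ∑ α ∈ S, α ^ m * (P α).eval (m : ℂ) := by
        rw [Finset.sum_sub_distrib, Finset.mul_sum]
    _ = 0 := by rw [h1, h2]; ring

lemma iter_sum (S : Finset ℂ) (P : ℂ → ℂ[X]) (γ : ℂ) (k : ℕ)
    (h : ∀ m : ℕ, ∑ α ∈ S, α ^ m * (P α).eval (m : ℂ) = 0) :
    ∀ m : ℕ, ∑ α ∈ S, α ^ m * ((Phi α γ)^[k] (P α)).eval (m : ℂ) = 0 := by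
  induction k generalizing P with
  | zero => simpa using h
  | succ k ih =>
    have := ih (fun α => Phi α γ (P α)) (step_sum S P γ h)
    intro m
    have h2 := this m
    simpa [Function.iterate_succ_apply] using h2

lemma poly_zero_of_nat_roots (p : ℂ[X]) (h : ∀ m : ℕ, p.eval (m : ℂ) = 0) : p = 0 := by
  apply eq_zero_of_infinite_isRoot
  apply Set.infinite_of_injective_forall_mem (f := fun m : ℕ => (m : ℂ))
  · exact fun a b hab => Nat.cast_injective hab
  · intro m; exact h m

lemma key_lemma (S : Finset ℂ) : ∀ P : ℂ → ℂ[X], (∀ α ∈ S, α ≠ 0) →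
    (∀ m : ℕ, ∑ α ∈ S, α ^ m * (P α).eval (m : ℂ) = 0) → ∀ α ∈ S, P α = 0 := by
  induction S using Finset.induction_on with
  | empty => intro P _ _ α hα; exact absurd hα (Finset.notMem_empty α)
  | insert _ _ hα₀ =>
    rename_i α₀ T ih
    intro P hS h
    set k := (P α₀).natDegree + 1 with hk
    have hiter := iter_sum (insert α₀ T) P α₀ k h
    have hkill : (Phi α₀ α₀)^[k] (P α₀) = 0 := Phi_kill α₀ (P α₀).natDegree (P α₀) le_rfl
    have hT : ∀ m : ℕ, ∑ α ∈ T, α ^ m * ((Phi α α₀)^[k] (P α)).eval (m : ℂ) = 0 := by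
      intro m
      have := hiter m
      rw [Finset.sum_insert hα₀, hkill] at this
      simpa using this
    have hTzero : ∀ α ∈ T, (Phi α α₀)^[k] (P α) = 0 :=
      ih (fun α => (Phi α α₀)^[k] (P α)) (fun α hα => hS α (Finset.mem_insert_of_mem hα)) hT
    have hPT : ∀ α ∈ T, P α = 0 := by
      intro α hα
      refine Phi_iter_eq_zero_imp α α₀ (fun hc => hα₀ (hc ▸ hα)) k (P α) (hTzero α hα)
    have hα₀ne : α₀ ≠ 0 := hS α₀ (Finset.mem_insert_self _ _)
    have hP0 : P α₀ = 0 := by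
      apply poly_zero_of_nat_roots
      intro m
      have := h m
      rw [Finset.sum_insert hα₀] at this
      rw [Finset.sum_eq_zero (fun α hα => by rw [hPT α hα]; simp)] at this
      have h2 : α₀ ^ m * (P α₀).eval (m : ℂ) = 0 := by rw [add_zero] at this; exact this
      exact (mul_eq_zero.mp h2).resolve_left (pow_ne_zero m hα₀ne)
    intro α hα
    rcases Finset.mem_insert.mp hα with rfl | hα
    · exact hP0
    · exact hPT α hα

lemma spanA (g : ℂ → ℂ) (hg : g ∈ Submodule.span ℂ {u : ℂ → ℂ | IsQuasiExponential u})
    (h0 : ∀ m : ℕ, g (m : ℂ) = 0) : g = 0 := by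
  rcases Submodule.mem_span_set'.mp hg with ⟨k, c, v, hsum⟩
  choose α p hα hrep using fun i => (v i).2
  classical
  set S : Finset ℂ := Finset.image α Finset.univ with hS
  set Q : ℂ → ℂ[X] := fun β => ∑ i ∈ Finset.univ.filter (fun i => α i = β), C (c i) * p i
    with hQ
  have hgx : ∀ x : ℂ, g x = ∑ β ∈ S, Complex.exp (x * Complex.log β) * (Q β).eval x := by
    intro x
    have : g x = ∑ i, c i * ((v i : ℂ → ℂ) x) := by
      rw [← hsum]; simp [Finset.sum_apply]
    rw [this]
    rw [← Finset.sum_fiberwise_of_maps_to (g := α) (t := S)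
      (fun i _ => Finset.mem_image_of_mem α (Finset.mem_univ i))]
    apply Finset.sum_congr rfl
    intro β _
    rw [hQ]
    simp only [eval_finset_sum, Finset.mul_sum, eval_mul, eval_C]
    apply Finset.sum_congr rfl
    intro i hi
    rw [Finset.mem_filter] at hi
    rw [hrep i, ← hi.2]
    ring
  have hSne : ∀ β ∈ S, β ≠ 0 := by
    intro β hβ
    rcases Finset.mem_image.mp hβ with ⟨i, _, rfl⟩
    exact hα i
  have hkey : ∀ β ∈ S, Q β = 0 := by
    apply key_lemma S Q hSne
    intro m
    have := h0 m
    rw [hgx m] at this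
    rw [← this]
    apply Finset.sum_congr rfl
    intro β hβ
    have hb : (β : ℂ) ^ m = Complex.exp ((m : ℂ) * Complex.log β) := by
      rw [Complex.exp_nat_mul, Complex.exp_log (hSne β hβ)]
    rw [hb]
  funext x
  rw [hgx x, Finset.sum_eq_zero]
  · rfl
  · intro β hβ; rw [hkey β hβ]; simp

lemma diffOp_sub {n : ℕ} (a : Fin n → ℂ → ℂ) (g₁ g₂ : ℂ → ℂ) (x : ℂ) :
    diffOpApply a (g₁ - g₂) x = diffOpApply a g₁ x - diffOpApply a g₂ x := by
  simp only [diffOpApply, Pi.sub_apply, mul_sub, Finset.sum_sub_distrib]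
  ring

lemma vanishNat {n : ℕ} (a : Fin n → ℂ → ℂ) (u : ℂ → ℂ)
    (hu : ∀ x, diffOpApply a u x = 0) (h0 : ∀ i : Fin n, u ((i : ℕ) : ℂ) = 0) :
    ∀ m : ℕ, u (m : ℂ) = 0 := by
  intro m
  induction m using Nat.strong_induction_on with
  | _ m ih =>
    rcases lt_or_ge m n with hm | hm
    · exact h0 ⟨m, hm⟩
    · have := hu (((m - n : ℕ) : ℂ))
      rw [diffOpApply] at this
      have hc : ((m - n : ℕ) : ℂ) + (n : ℂ) = (m : ℂ) := by
        rw [← Nat.cast_add, Nat.sub_add_cancel hm]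
      rw [hc] at this
      rw [Finset.sum_eq_zero, add_zero] at this
      · exact this
      · intro j _
        have hc2 : ((m - n : ℕ) : ℂ) + ((n - (j.val + 1) : ℕ) : ℂ)
            = (((m - n) + (n - (j.val + 1)) : ℕ) : ℂ) := by push_cast; ring
        rw [hc2, ih _ (by omega), mul_zero]

lemma mem_of_ann {n : ℕ} (f : Fin n → ℂ → ℂ) (hf : ∀ i, IsQuasiExponential (f i))
    (hfi : LinearIndependent ℂ f) (a : Fin n → ℂ → ℂ)
    (hann : ∀ g ∈ Submodule.span ℂ (Set.range f), ∀ x, diffOpApply a g x = 0)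
    (g : ℂ → ℂ) (hgq : g ∈ Submodule.span ℂ {u : ℂ → ℂ | IsQuasiExponential u})
    (hga : ∀ x, diffOpApply a g x = 0) : g ∈ Submodule.span ℂ (Set.range f) := by
  classical
  set W := Submodule.span ℂ (Set.range f) with hW
  have hWq : W ≤ Submodule.span ℂ {u : ℂ → ℂ | IsQuasiExponential u} := by
    apply Submodule.span_le.mpr
    rintro u ⟨i, rfl⟩
    exact Submodule.subset_span (hf i)
  haveI : FiniteDimensional ℂ W := FiniteDimensional.span_of_finite ℂ (Set.finite_range f)
  have hdim : Module.finrank ℂ W = n := by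
    rw [hW, finrank_span_eq_card hfi, Fintype.card_fin]
  let R : (ℂ → ℂ) →ₗ[ℂ] (Fin n → ℂ) :=
    LinearMap.pi (fun i : Fin n => LinearMap.proj ((i : ℕ) : ℂ))
  let T : W →ₗ[ℂ] (Fin n → ℂ) := R.comp W.subtype
  have hTinj : Function.Injective T := by
    rw [← LinearMap.ker_eq_bot]
    rw [Submodule.eq_bot_iff]
    rintro ⟨w, hw⟩ hker
    rw [LinearMap.mem_ker] at hker
    have hw0 : ∀ i : Fin n, w ((i : ℕ) : ℂ) = 0 := fun i => congrFun hker i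
    have hwz : w = 0 := spanA w (hWq hw) (vanishNat a w (hann w hw) hw0)
    simpa using hwz
  have hTsurj : Function.Surjective T := by
    have := (LinearMap.injective_iff_surjective_of_finrank_eq_finrank
      (f := T) (by rw [hdim, Module.finrank_pi, Fintype.card_fin])).mp hTinj
    exact this
  obtain ⟨w, hw⟩ := hTsurj (R g)
  have hweq : ∀ i : Fin n, (w : ℂ → ℂ) ((i : ℕ) : ℂ) = g ((i : ℕ) : ℂ) := by
    intro i
    exact congrFun hw i
  have husub : g - (w : ℂ → ℂ) = 0 := by
    apply spanA
    · exact Submodule.sub_mem _ hgq (hWq w.2)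
    · apply vanishNat a
      · intro x
        rw [diffOp_sub, hga, hann _ w.2, sub_zero]
      · intro i
        simp [hweq i]
  have : g = (w : ℂ → ℂ) := by
    have := sub_eq_zero.mp husub
    exact this
  rw [this]
  exact w.2

end Aux

/-- If `W₁` and `W₂` are two spaces of quasi-exponentials (finite-dimensional
spaces spanned by linearly independent quasi-exponentials) whose monic fundamental difference
operators coincide (both are of order `n = dim W₁ = dim W₂` and annihilate the respective
spaces), then `W₁ = W₂`. -/
theorem stmt4 {n : ℕ} (f h : Fin n → ℂ → ℂ)
    (hf : ∀ i, IsQuasiExponential (f i)) (hh : ∀ i, IsQuasiExponential (h i))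
    (hfi : LinearIndependent ℂ f) (hhi : LinearIndependent ℂ h)
    (W₁ W₂ : Submodule ℂ (ℂ → ℂ))
    (hW₁ : W₁ = Submodule.span ℂ (Set.range f))
    (hW₂ : W₂ = Submodule.span ℂ (Set.range h))
    (a : Fin n → ℂ → ℂ)
    (hann₁ : ∀ g ∈ W₁, ∀ x, diffOpApply a g x = 0)
    (hann₂ : ∀ g ∈ W₂, ∀ x, diffOpApply a g x = 0) :
    W₁ = W₂ := by
  subst hW₁ hW₂
  have hfq : Submodule.span ℂ (Set.range f) ≤
      Submodule.span ℂ {u : ℂ → ℂ | IsQuasiExponential u} :=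
    Submodule.span_le.mpr (by rintro u ⟨i, rfl⟩; exact Submodule.subset_span (hf i))
  have hhq : Submodule.span ℂ (Set.range h) ≤
      Submodule.span ℂ {u : ℂ → ℂ | IsQuasiExponential u} :=
    Submodule.span_le.mpr (by rintro u ⟨i, rfl⟩; exact Submodule.subset_span (hh i))
  apply le_antisymm
  · intro g hg
    exact mem_of_ann h hh hhi a hann₂ g (hfq hg) (hann₁ g hg)
  · intro g hg
    exact mem_of_ann f hf hfi a hann₁ g (hhq hg) (hann₂ g hg)
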